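/- Let (L_α) be a family of orthocomplemented simple closure spaces. If the box product ⊼_α L_α has the covering property or is orthomodular, then there is at most one β such that L_β is not the power set of Σ_β. (Aerts' theorem.) -/
import Mathlib


open Set

/-- A simple closure space on `σ`: a family of subsets closed under arbitrary
intersections (the empty intersection giving `univ`), containing `∅` and all singletons. -/
def IsSCS {σ : Type*} (L : Set (Set σ)) : Prop :=
  (∀ ω ⊆ L, ⋂₀ ω ∈ L) ∧ (∅ : Set σ) ∈ L ∧ ∀ p : σ, {p} ∈ L

/-- The join of a subset `A` of atoms/points in a simple closure space `L`. -/
def sJoin {σ : Type*} (L : Set (Set σ)) (A : Set σ) : Set σ := ⋂₀ {b ∈ L | A ⊆ b}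

/-- `b` covers `a` in `L`. -/
def CoversIn {σ : Type*} (L : Set (Set σ)) (a b : Set σ) : Prop :=
  a ⊂ b ∧ ∀ c ∈ L, a ⊆ c → c ⊆ b → c = a ∨ c = b

/-- `x` is a coatom of `L`. -/
def IsCoatomOf {σ : Type*} (L : Set (Set σ)) (x : Set σ) : Prop :=
  x ∈ L ∧ x ≠ univ ∧ ∀ c ∈ L, x ⊆ c → c = x ∨ c = univ

/-- `L` is coatomistic: every element is a meet of coatoms. -/
def Coatomistic {σ : Type*} (L : Set (Set σ)) : Prop :=
  ∀ a ∈ L, a = ⋂₀ {x | IsCoatomOf L x ∧ a ⊆ x}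

/-- Covering property: for any atom `p` and `a ∈ L` with `p ∧ a = 0`,
`p ∨ a` covers `a`. -/
def HasCovProp {σ : Type*} (L : Set (Set σ)) : Prop :=
  ∀ p : σ, ∀ a ∈ L, p ∉ a → CoversIn L a (sJoin L (insert p a))

/-- Covering property of the dual lattice of `L`. -/
def HasDualCovProp {σ : Type*} (L : Set (Set σ)) : Prop :=
  ∀ x, IsCoatomOf L x → ∀ a ∈ L, sJoin L (x ∪ a) = univ → CoversIn L (x ∩ a) a

/-- `f` is an orthocomplementation of `L`: an order-reversing involution with
`a ∨ f a = 1` for all `a ∈ L`. -/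
def IsOrthoOn {σ : Type*} (L : Set (Set σ)) (f : Set σ → Set σ) : Prop :=
  (∀ a ∈ L, f a ∈ L) ∧ (∀ a ∈ L, f (f a) = a) ∧
  (∀ a ∈ L, ∀ b ∈ L, a ⊆ b → f b ⊆ f a) ∧
  (∀ a ∈ L, ∀ b ∈ L, a ∪ f a ⊆ b → b = univ)

/-- The permutation `g` of the points induces an automorphism of `L`. -/
def IsAutoOn {σ : Type*} (L : Set (Set σ)) (g : Equiv.Perm σ) : Prop :=
  ∀ a, a ∈ L ↔ g '' a ∈ L

/-- `L` contains `MO₃`: three distinct atoms `p, q, r` such that `p ∨ q`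
covers each of them. -/
def ContainsMO3 {σ : Type*} (L : Set (Set σ)) : Prop :=
  ∃ p q r : σ, p ≠ q ∧ p ≠ r ∧ q ≠ r ∧
    CoversIn L {p} (sJoin L {p, q}) ∧ CoversIn L {q} (sJoin L {p, q}) ∧
    CoversIn L {r} (sJoin L {p, q})

/-- `L` contains `MO₄`: four distinct atoms `p, q, r, s` such that `p ∨ q`
covers each of them. -/
def ContainsMO4 {σ : Type*} (L : Set (Set σ)) : Prop :=
  ∃ p q r s : σ, p ≠ q ∧ p ≠ r ∧ p ≠ s ∧ q ≠ r ∧ q ≠ s ∧ r ≠ s ∧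
    CoversIn L {p} (sJoin L {p, q}) ∧ CoversIn L {q} (sJoin L {p, q}) ∧
    CoversIn L {r} (sJoin L {p, q}) ∧ CoversIn L {s} (sJoin L {p, q})

/-- A connected covering of the point set of `L`. -/
def IsConnCover {σ : Type*} (L : Set (Set σ)) (𝒜 : Set (Set σ)) : Prop :=
  ⋃₀ 𝒜 = Set.univ ∧
  (∀ A ∈ 𝒜, ∃ p q : σ, p ∈ A ∧ q ∈ A ∧ p ≠ q) ∧
  (∀ A ∈ 𝒜, ∀ p ∈ A, ∀ q ∈ A, p ≠ q → ∃ r, r ∈ sJoin L {p, q} ∧ r ≠ p ∧ r ≠ q) ∧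
  (∀ p q : σ, ∃ n : ℕ, ∃ c : Fin (n + 1) → Set σ, (∀ i, c i ∈ 𝒜) ∧
    p ∈ c 0 ∧ q ∈ c (Fin.last n) ∧
    ∀ i : Fin n, ∃ x y : σ, x ≠ y ∧ (x ∈ c i.castSucc ∧ x ∈ c i.succ) ∧
      (y ∈ c i.castSucc ∧ y ∈ c i.succ))

/-- `L` is weakly connected: `L ≠ 2` and there is a connected covering. -/
def WeaklyConnected {σ : Type*} (L : Set (Set σ)) : Prop :=
  (∃ p q : σ, p ≠ q) ∧ ∃ 𝒜, IsConnCover L 𝒜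

/-- Restriction of `L` to the subset `e`, as a family of subsets of `↥e`. -/
def restrictCS {σ : Type*} (L : Set (Set σ)) (e : Set σ) : Set (Set e) :=
  {B | ∃ a ∈ L, a ⊆ e ∧ B = Subtype.val ⁻¹' a}

/-- Center of an orthocomplemented simple closure space: elements whose
orthocomplement is the set complement. -/
def centerOf {σ : Type*} (L : Set (Set σ)) (f : Set σ → Set σ) : Set (Set σ) :=
  {a ∈ L | f a = aᶜ}

/-- Central cover of a point `p`. -/
def centralCover {σ : Type*} (L : Set (Set σ)) (f : Set σ → Set σ) (p : σ) : Set σ :=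
  ⋂₀ {a ∈ centerOf L f | p ∈ a}

section Family

variable {Ω : Type*} {X : Ω → Type*}

/-- `⋃_α π_α⁻¹ (a α)`. -/
def cylUnion (a : ∀ α, Set (X α)) : Set (∀ α, X α) := {p | ∃ α, p α ∈ a α}

/-- `p[B, β]`: the point `p` with its `β`-th coordinate varying over `B`. -/
def pSub (p : ∀ α, X α) (β : Ω) (B : Set (X β)) : Set (∀ α, X α) :=
  {q | q β ∈ B ∧ ∀ α, α ≠ β → q α = p α}

/-- The section `R_β[p]` of `R ⊆ ∏_α X α`. -/
def sect (R : Set (∀ α, X α)) (β : Ω) (p : ∀ α, X α) : Set (X β) :=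
  {q | ∃ r ∈ R, r β = q ∧ ∀ α, α ≠ β → r α = p α}

/-- The box product `⊼_α L_α`: all nonempty intersections of the sets
`⋃_α π_α⁻¹ (a α)`. -/
def boxProd (L : ∀ α, Set (Set (X α))) : Set (Set (∀ α, X α)) :=
  {A | ∃ ω ⊆ {B | ∃ a : ∀ α, Set (X α), (∀ α, a α ∈ L α) ∧ B = cylUnion a},
    ω.Nonempty ∧ A = ⋂₀ ω}

/-- The Fraser product `⊻_α L_α`: all `R` whose sections all lie in the factors. -/
def fraserProd (L : ∀ α, Set (Set (X α))) : Set (Set (∀ α, X α)) :=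
  {R | ∀ β, ∀ p : ∀ α, X α, sect R β p ∈ L β}

/-- `M` is a weak tensor product of the family `L`: axioms P1–P3. -/
def IsWTP (L : ∀ α, Set (Set (X α))) (M : Set (Set (∀ α, X α))) : Prop :=
  IsSCS M ∧ (∀ a : ∀ α, Set (X α), (∀ α, a α ∈ L α) → cylUnion a ∈ M) ∧
  (∀ p : ∀ α, X α, ∀ β, ∀ B : Set (X β), pSub p β B ∈ M → B ∈ L β)

/-- The closure operator `⋁_β R = ⋃_p p[⋁ R_β[p]]`. -/
def vJoin (L : ∀ α, Set (Set (X α))) (β : Ω) (R : Set (∀ α, X α)) : Set (∀ α, X α) :=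
  ⋃ p : ∀ α, X α, pSub p β (sJoin (L β) (sect R β p))

/-- The orthocomplementation `#` induced on the box product by
orthocomplementations of the factors. -/
def sharp (f : ∀ α, Set (X α) → Set (X α)) (a : Set (∀ α, X α)) : Set (∀ α, X α) :=
  {p | ∀ q ∈ a, ∃ α, p α ∈ f α {q α}}

end Family

section Binary

variable {X₁ X₂ : Type*}

/-- `a₁ × Σ₂ ∪ Σ₁ × a₂`. -/
def cylUnion₂ (a₁ : Set X₁) (a₂ : Set X₂) : Set (X₁ × X₂) := {p | p.1 ∈ a₁ ∨ p.2 ∈ a₂}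

/-- Binary box product. -/
def boxProd₂ (L₁ : Set (Set X₁)) (L₂ : Set (Set X₂)) : Set (Set (X₁ × X₂)) :=
  {A | ∃ ω ⊆ {B | ∃ a₁ ∈ L₁, ∃ a₂ ∈ L₂, B = cylUnion₂ a₁ a₂}, ω.Nonempty ∧ A = ⋂₀ ω}

/-- Binary Fraser product. -/
def fraserProd₂ (L₁ : Set (Set X₁)) (L₂ : Set (Set X₂)) : Set (Set (X₁ × X₂)) :=
  {R | (∀ p₁, {q | (p₁, q) ∈ R} ∈ L₂) ∧ (∀ p₂, {q | (q, p₂) ∈ R} ∈ L₁)}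

/-- Binary weak tensor product: axioms P1–P3. -/
def IsWTP₂ (L₁ : Set (Set X₁)) (L₂ : Set (Set X₂)) (M : Set (Set (X₁ × X₂))) : Prop :=
  IsSCS M ∧ (∀ a₁ ∈ L₁, ∀ a₂ ∈ L₂, cylUnion₂ a₁ a₂ ∈ M) ∧
  (∀ p₁ : X₁, ∀ A₂ : Set X₂, {p₁} ×ˢ A₂ ∈ M → A₂ ∈ L₂) ∧
  (∀ p₂ : X₂, ∀ A₁ : Set X₁, A₁ ×ˢ {p₂} ∈ M → A₁ ∈ L₁)

/-- The simple closure space `MO_Σ`, containing only `∅`, `Σ` and the singletons. -/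
def MOspace (X : Type*) : Set (Set X) := {∅, univ} ∪ {A | ∃ p, A = {p}}

end Binary
section AuxSingle

variable {σ : Type*} {L : Set (Set σ)} {f : Set σ → Set σ}

lemma subset_sJoin' (S : Set σ) : S ⊆ sJoin L S := fun x hx =>
  Set.mem_sInter.2 fun _ hb => hb.2 hx

lemma sJoin_subset' {S b : Set σ} (hb : b ∈ L) (hS : S ⊆ b) : sJoin L S ⊆ b :=
  Set.sInter_subset_of_mem ⟨hb, hS⟩

lemma sJoin_mem' (hL : IsSCS L) (S : Set σ) : sJoin L S ∈ L :=
  hL.1 _ (Set.sep_subset _ _)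

lemma sJoin_eq_self' {a : Set σ} (ha : a ∈ L) : sJoin L a = a :=
  subset_antisymm (sJoin_subset' ha subset_rfl) (subset_sJoin' a)

lemma univ_mem' (hL : IsSCS L) : (Set.univ : Set σ) ∈ L := by
  have h := hL.1 ∅ (empty_subset L)
  simpa using h

lemma f_empty' (hL : IsSCS L) (hf : IsOrthoOn L f) : f ∅ = Set.univ :=
  hf.2.2.2 ∅ hL.2.1 (f ∅) (hf.1 ∅ hL.2.1) (by simp)

lemma f_univ' (hL : IsSCS L) (hf : IsOrthoOn L f) : f Set.univ = ∅ := by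
  have h := hf.2.1 ∅ hL.2.1
  rwa [f_empty' hL hf] at h

lemma notMem_f_singleton' (hL : IsSCS L) (hf : IsOrthoOn L f) (p : σ) : p ∉ f {p} := by
  intro hp
  have h2 : f {p} = Set.univ :=
    hf.2.2.2 {p} (hL.2.2 p) (f {p}) (hf.1 _ (hL.2.2 p))
      (union_subset (singleton_subset_iff.2 hp) subset_rfl)
  have h3 : f (f {p}) = {p} := hf.2.1 {p} (hL.2.2 p)
  rw [h2, f_univ' hL hf] at h3
  exact (Set.singleton_ne_empty p) h3.symm

lemma exists_nonortho' (hL : IsSCS L) (hf : IsOrthoOn L f) (hne : L ≠ Set.univ) :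
    ∃ p q : σ, q ≠ p ∧ q ∉ f {p} := by
  by_contra hcon
  push_neg at hcon
  apply hne
  ext A
  simp only [Set.mem_univ, iff_true]
  have hA : A = ⋂₀ {S | ∃ t, t ∉ A ∧ S = f {t}} := by
    ext x
    simp only [Set.mem_sInter, Set.mem_setOf_eq]
    constructor
    · rintro hxA S ⟨t, htA, rfl⟩
      exact hcon t x (fun h => htA (h ▸ hxA))
    · intro hx
      by_contra hxA
      exact notMem_f_singleton' hL hf x (hx (f {x}) ⟨x, hxA, rfl⟩)
  rw [hA]
  exact hL.1 _ (by rintro S ⟨t, -, rfl⟩; exact hf.1 {t} (hL.2.2 t))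

/-- Exchange property of a simple closure space. -/
def ExchProp {σ : Type*} (L : Set (Set σ)) : Prop :=
  ∀ m ∈ L, ∀ y y' : σ, y ∉ m → y' ∉ m →
    y' ∈ sJoin L (insert y m) → y ∈ sJoin L (insert y' m)

lemma exists_superpos' (hL : IsSCS L) (hf : IsOrthoOn L f) (hE : ExchProp L)
    {p q : σ} (hne : q ≠ p) (hq : q ∉ f {p}) :
    ∃ r, r ∈ sJoin L {p, q} ∧ r ≠ p ∧ r ≠ q := by
  by_contra hcon
  push_neg at hcon
  have hpL : ({p} : Set σ) ∈ L := hL.2.2 p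
  have hqL : ({q} : Set σ) ∈ L := hL.2.2 q
  have hu : f {p} ∈ L := hf.1 _ hpL
  have hu' : f {q} ∈ L := hf.1 _ hqL
  have hmL : f {p} ∩ f {q} ∈ L := by
    have h := hL.1 {f {p}, f {q}} (by
      intro S hS
      rw [Set.mem_insert_iff, Set.mem_singleton_iff] at hS
      rcases hS with rfl | rfl
      · exact hu
      · exact hu')
    rwa [Set.sInter_pair] at h
  have hDL : sJoin L {p, q} ∈ L := sJoin_mem' hL _
  have hD : sJoin L {p, q} = {p, q} := by
    apply subset_antisymm _ (subset_sJoin' _)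
    intro r hr
    by_cases hrp : r = p
    · exact Set.mem_insert_iff.2 (Or.inl hrp)
    · exact Set.mem_insert_iff.2 (Or.inr (hcon r hr hrp))
  have hpD : ({p} : Set σ) ⊆ sJoin L {p, q} :=
    singleton_subset_iff.2 (subset_sJoin' _ (Set.mem_insert p _))
  have hqD : ({q} : Set σ) ⊆ sJoin L {p, q} :=
    singleton_subset_iff.2 (subset_sJoin' _ (Set.mem_insert_of_mem p rfl))
  have hfD : f (sJoin L {p, q}) ⊆ f {p} ∩ f {q} :=
    subset_inter (hf.2.2.1 {p} hpL _ hDL hpD) (hf.2.2.1 {q} hqL _ hDL hqD)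
  have hfm : f (f {p} ∩ f {q}) ⊆ {p, q} := by
    have h2 : f (f {p} ∩ f {q}) ⊆ f (f (sJoin L {p, q})) :=
      hf.2.2.1 _ (hf.1 _ hDL) _ hmL hfD
    rwa [hf.2.1 _ hDL, hD] at h2
  have hCL : sJoin L (insert p (f {p} ∩ f {q})) ∈ L := sJoin_mem' hL _
  have hfC : f (sJoin L (insert p (f {p} ∩ f {q}))) = ∅ := by
    rw [Set.eq_empty_iff_forall_notMem]
    intro x hx
    have hx1 : x ∈ ({p, q} : Set σ) := hfm (hf.2.2.1 _ hmL _ hCL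
      ((Set.subset_insert p _).trans (subset_sJoin' _)) hx)
    have hx2 : x ∈ f {p} := hf.2.2.1 {p} hpL _ hCL
      (singleton_subset_iff.2 (subset_sJoin' _ (Set.mem_insert p _))) hx
    rw [Set.mem_insert_iff, Set.mem_singleton_iff] at hx1
    rcases hx1 with rfl | rfl
    · exact notMem_f_singleton' hL hf x hx2
    · exact hq hx2
  have hC : sJoin L (insert p (f {p} ∩ f {q})) = Set.univ := by
    have h := hf.2.1 _ hCL
    rw [hfC, f_empty' hL hf] at h
    exact h.symm
  have hxex : ∃ x, x ∈ f {p} ∧ x ∉ f {q} := by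
    by_contra hcc
    push_neg at hcc
    have h2 := hf.2.2.1 _ hu _ hu' hcc
    rw [hf.2.1 _ hqL, hf.2.1 _ hpL] at h2
    exact hne (Set.mem_singleton_iff.1 (h2 rfl))
  obtain ⟨x, hxu, hxu'⟩ := hxex
  have hpu : p ∉ f {p} := notMem_f_singleton' hL hf p
  have hpx : p ∈ sJoin L (insert x (f {p} ∩ f {q})) :=
    hE _ hmL p x (fun hh => hpu hh.1) (fun hh => hxu' hh.2) (by rw [hC]; trivial)
  exact hpu (sJoin_subset' hu (insert_subset hxu inter_subset_left) hpx)

end AuxSingle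

section AuxBox

variable {Ω : Type*} [Nonempty Ω] {X : Ω → Type*} [∀ α, Nonempty (X α)]
  {L : ∀ α, Set (Set (X α))}

lemma cylUnion_mem_box (hL : ∀ α, IsSCS (L α)) {a : ∀ α, Set (X α)}
    (ha : ∀ α, a α ∈ L α) : cylUnion a ∈ boxProd L := by
  refine ⟨{cylUnion a}, ?_, ⟨_, rfl⟩, (Set.sInter_singleton _).symm⟩
  intro B hB
  rw [Set.mem_singleton_iff] at hB
  subst hB
  exact ⟨a, ha, rfl⟩

lemma univ_gen (hL : ∀ α, IsSCS (L α)) :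
    (Set.univ : Set (∀ α, X α)) ∈
      {B | ∃ a : ∀ α, Set (X α), (∀ α, a α ∈ L α) ∧ B = cylUnion a} := by
  refine ⟨fun _ => Set.univ, fun α => univ_mem' (hL α), ?_⟩
  ext p
  simp only [cylUnion, Set.mem_univ, Set.mem_setOf_eq, true_iff]
  exact ⟨Classical.arbitrary Ω, trivial⟩

lemma sJoin_box_eq (hL : ∀ α, IsSCS (L α)) (S : Set (∀ α, X α)) :
    sJoin (boxProd L) S =
      ⋂₀ {B | (∃ a : ∀ α, Set (X α), (∀ α, a α ∈ L α) ∧ B = cylUnion a) ∧ S ⊆ B} := by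
  apply subset_antisymm
  · apply sJoin_subset'
    · exact ⟨{B | (∃ a : ∀ α, Set (X α), (∀ α, a α ∈ L α) ∧ B = cylUnion a) ∧ S ⊆ B},
        fun B hB => hB.1, ⟨Set.univ, univ_gen hL, subset_univ S⟩, rfl⟩
    · intro x hx
      exact Set.mem_sInter.2 fun B hB => hB.2 hx
  · intro x hx
    apply Set.mem_sInter.2
    rintro E ⟨⟨ω, hω, hωne, rfl⟩, hSE⟩
    apply Set.mem_sInter.2
    intro B hB
    exact Set.mem_sInter.1 hx B ⟨hω hB, hSE.trans (Set.sInter_subset_of_mem hB)⟩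

lemma sJoin_box_mem (hL : ∀ α, IsSCS (L α)) (S : Set (∀ α, X α)) :
    sJoin (boxProd L) S ∈ boxProd L := by
  rw [sJoin_box_eq hL]
  exact ⟨{B | (∃ a : ∀ α, Set (X α), (∀ α, a α ∈ L α) ∧ B = cylUnion a) ∧ S ⊆ B},
    fun B hB => hB.1, ⟨Set.univ, ⟨univ_gen hL, subset_univ S⟩⟩, rfl⟩

lemma mem_sJoin_box (hL : ∀ α, IsSCS (L α)) {S : Set (∀ α, X α)} {x : ∀ α, X α}
    (hx : ∀ a : ∀ α, Set (X α), (∀ α, a α ∈ L α) → S ⊆ cylUnion a → x ∈ cylUnion a) :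
    x ∈ sJoin (boxProd L) S := by
  rw [sJoin_box_eq hL]
  apply Set.mem_sInter.2
  rintro B ⟨⟨a, ha, rfl⟩, hSB⟩
  exact hx a ha hSB

variable [DecidableEq Ω]

/-- one-coordinate cylinder family -/
def upd1 (α₀ : Ω) (T : Set (X α₀)) : ∀ α, Set (X α) :=
  Function.update (fun α => (∅ : Set (X α))) α₀ T

lemma upd1_mem (hL : ∀ α, IsSCS (L α)) {α₀ : Ω} {T : Set (X α₀)} (hT : T ∈ L α₀) :
    ∀ α, upd1 (X := X) α₀ T α ∈ L α := by
  intro α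
  by_cases h : α = α₀
  · subst h; rw [upd1, Function.update_self]; exact hT
  · rw [upd1, Function.update_of_ne h]; exact (hL α).2.1

lemma mem_cyl_upd1 {α₀ : Ω} {T : Set (X α₀)} {x : ∀ α, X α} :
    x ∈ cylUnion (upd1 (X := X) α₀ T) ↔ x α₀ ∈ T := by
  constructor
  · rintro ⟨α, hα⟩
    by_cases h : α = α₀
    · subst h; rwa [upd1, Function.update_self] at hα
    · rw [upd1, Function.update_of_ne h] at hα; exact absurd hα (Set.notMem_empty _)
  · intro h
    exact ⟨α₀, by rw [upd1, Function.update_self]; exact h⟩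

/-- two-coordinate cylinder family -/
def upd2 (β γ : Ω) (T : Set (X β)) (U : Set (X γ)) : ∀ α, Set (X α) :=
  Function.update (Function.update (fun α => (∅ : Set (X α))) β T) γ U

lemma upd2_mem (hL : ∀ α, IsSCS (L α)) {β γ : Ω} (hβγ : β ≠ γ)
    {T : Set (X β)} {U : Set (X γ)} (hT : T ∈ L β) (hU : U ∈ L γ) :
    ∀ α, upd2 (X := X) β γ T U α ∈ L α := by
  intro α
  by_cases h : α = γ
  · subst h; rw [upd2, Function.update_self]; exact hU
  · rw [upd2, Function.update_of_ne h]
    by_cases h2 : α = β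
    · subst h2; rw [Function.update_self]; exact hT
    · rw [Function.update_of_ne h2]; exact (hL α).2.1

lemma mem_cyl_upd2 {β γ : Ω} (hβγ : β ≠ γ) {T : Set (X β)} {U : Set (X γ)} {x : ∀ α, X α} :
    x ∈ cylUnion (upd2 (X := X) β γ T U) ↔ (x β ∈ T ∨ x γ ∈ U) := by
  constructor
  · rintro ⟨α, hα⟩
    by_cases h : α = γ
    · subst h; rw [upd2, Function.update_self] at hα; exact Or.inr hα
    · rw [upd2, Function.update_of_ne h] at hα
      by_cases h2 : α = β
      · subst h2; rw [Function.update_self] at hα; exact Or.inl hα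
      · rw [Function.update_of_ne h2] at hα; exact absurd hα (Set.notMem_empty _)
  · rintro (h | h)
    · exact ⟨β, by rw [upd2, Function.update_of_ne hβγ, Function.update_self]; exact h⟩
    · exact ⟨γ, by rw [upd2, Function.update_self]; exact h⟩

lemma point_closed (hL : ∀ α, IsSCS (L α)) (w : ∀ α, X α) :
    sJoin (boxProd L) {w} = {w} := by
  apply subset_antisymm _ (subset_sJoin' _)
  intro r hr
  have hcoord : ∀ α₀, r α₀ = w α₀ := by
    intro α₀
    have hsub : sJoin (boxProd L) {w} ⊆ cylUnion (upd1 (X := X) α₀ {w α₀}) :=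
      sJoin_subset' (cylUnion_mem_box hL (upd1_mem hL ((hL α₀).2.2 (w α₀))))
        (singleton_subset_iff.2 (mem_cyl_upd1.2 rfl))
    have hm : r α₀ ∈ ({w α₀} : Set (X α₀)) := mem_cyl_upd1.1 (hsub hr)
    exact hm
  exact Set.mem_singleton_iff.2 (funext hcoord)

lemma point_mem_box (hL : ∀ α, IsSCS (L α)) (w : ∀ α, X α) :
    ({w} : Set (∀ α, X α)) ∈ boxProd L := by
  rw [← point_closed hL w]
  exact sJoin_box_mem hL _

lemma pair_closed (hL : ∀ α, IsSCS (L α)) {β γ : Ω} (hβγ : β ≠ γ) (z : ∀ α, X α)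
    {x1 y1 : X β} {x2 y2 : X γ} (h1 : x1 ≠ y1) (h2 : x2 ≠ y2) :
    sJoin (boxProd L)
      {Function.update (Function.update z β x1) γ x2,
       Function.update (Function.update z β y1) γ y2} =
    {Function.update (Function.update z β x1) γ x2,
     Function.update (Function.update z β y1) γ y2} := by
  set u := Function.update (Function.update z β x1) γ x2 with hu
  set v := Function.update (Function.update z β y1) γ y2 with hv
  have huβ : u β = x1 := by rw [hu, Function.update_of_ne hβγ, Function.update_self]
  have huγ : u γ = x2 := by rw [hu, Function.update_self]
  have huo : ∀ α, α ≠ β → α ≠ γ → u α = z α := fun α hαβ hαγ => by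
    rw [hu, Function.update_of_ne hαγ, Function.update_of_ne hαβ]
  have hvβ : v β = y1 := by rw [hv, Function.update_of_ne hβγ, Function.update_self]
  have hvγ : v γ = y2 := by rw [hv, Function.update_self]
  have hvo : ∀ α, α ≠ β → α ≠ γ → v α = z α := fun α hαβ hαγ => by
    rw [hv, Function.update_of_ne hαγ, Function.update_of_ne hαβ]
  apply subset_antisymm _ (subset_sJoin' _)
  intro r hr
  have hro : ∀ α, α ≠ β → α ≠ γ → r α = z α := by
    intro α₀ hαβ hαγ
    have hsub : sJoin (boxProd L) {u, v} ⊆ cylUnion (upd1 (X := X) α₀ {z α₀}) :=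
      sJoin_subset' (cylUnion_mem_box hL (upd1_mem hL ((hL α₀).2.2 (z α₀))))
        (by
          intro x hx
          rw [Set.mem_insert_iff, Set.mem_singleton_iff] at hx
          rcases hx with rfl | rfl
          · exact mem_cyl_upd1.2 (by rw [huo α₀ hαβ hαγ]; rfl)
          · exact mem_cyl_upd1.2 (by rw [hvo α₀ hαβ hαγ]; rfl))
    have hm : r α₀ ∈ ({z α₀} : Set (X α₀)) := mem_cyl_upd1.1 (hsub hr)
    exact hm
  have hg3 : r β = x1 ∨ r γ = y2 := by
    have hsub : sJoin (boxProd L) {u, v} ⊆ cylUnion (upd2 (X := X) β γ {x1} {y2}) :=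
      sJoin_subset' (cylUnion_mem_box hL (upd2_mem hL hβγ ((hL β).2.2 x1) ((hL γ).2.2 y2)))
        (by
          intro x hx
          rw [Set.mem_insert_iff, Set.mem_singleton_iff] at hx
          rcases hx with rfl | rfl
          · exact (mem_cyl_upd2 hβγ).2 (Or.inl (by rw [huβ]; rfl))
          · exact (mem_cyl_upd2 hβγ).2 (Or.inr (by rw [hvγ]; rfl)))
    exact (mem_cyl_upd2 hβγ).1 (hsub hr)
  have hg4 : r β = y1 ∨ r γ = x2 := by
    have hsub : sJoin (boxProd L) {u, v} ⊆ cylUnion (upd2 (X := X) β γ {y1} {x2}) :=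
      sJoin_subset' (cylUnion_mem_box hL (upd2_mem hL hβγ ((hL β).2.2 y1) ((hL γ).2.2 x2)))
        (by
          intro x hx
          rw [Set.mem_insert_iff, Set.mem_singleton_iff] at hx
          rcases hx with rfl | rfl
          · exact (mem_cyl_upd2 hβγ).2 (Or.inr (by rw [huγ]; rfl))
          · exact (mem_cyl_upd2 hβγ).2 (Or.inl (by rw [hvβ]; rfl)))
    exact (mem_cyl_upd2 hβγ).1 (hsub hr)
  rw [Set.mem_insert_iff, Set.mem_singleton_iff]
  rcases hg3 with h3 | h3 <;> rcases hg4 with h4 | h4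
  · exact absurd (h3.symm.trans h4) h1
  · refine Or.inl (funext fun α => ?_)
    by_cases hαβ : α = β
    · subst hαβ; rw [h3, huβ]
    · by_cases hαγ : α = γ
      · subst hαγ; rw [h4, huγ]
      · rw [hro α hαβ hαγ, huo α hαβ hαγ]
  · refine Or.inr (funext fun α => ?_)
    by_cases hαβ : α = β
    · subst hαβ; rw [h4, hvβ]
    · by_cases hαγ : α = γ
      · subst hαγ; rw [h3, hvγ]
      · rw [hro α hαβ hαγ, hvo α hαβ hαγ]
  · exact absurd (h4.symm.trans h3) h2

end AuxBox


lemma cov_exch {Ω : Type*} [Nonempty Ω] {X : Ω → Type*} [∀ α, Nonempty (X α)]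
    [DecidableEq Ω] {L : ∀ α, Set (Set (X α))}
    (hL : ∀ α, IsSCS (L α)) (hcov : HasCovProp (boxProd L)) (δ : Ω) : ExchProp (L δ) := by
  intro m hm y y' hy hy' hyy'
  by_contra hnot
  set z : ∀ α, X α := fun α => Classical.arbitrary (X α) with hz
  set s : ∀ α, X α := Function.update z δ y with hs
  set s'' : ∀ α, X α := Function.update z δ y' with hs''
  have hsδ : s δ = y := by rw [hs, Function.update_self]
  have hs''δ : s'' δ = y' := by rw [hs'', Function.update_self]
  have hso : ∀ α, α ≠ δ → s α = z α := fun α h => by rw [hs, Function.update_of_ne h]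
  have hs''o : ∀ α, α ≠ δ → s'' α = z α := fun α h => by rw [hs'', Function.update_of_ne h]
  set A := cylUnion (upd1 (X := X) δ m) with hA
  have hAB : A ∈ boxProd L := cylUnion_mem_box hL (upd1_mem hL hm)
  have hsA : s ∉ A := fun hc => hy (by rw [← hsδ]; exact mem_cyl_upd1.1 hc)
  have hs''A : s'' ∉ A := fun hc => hy' (by rw [← hs''δ]; exact mem_cyl_upd1.1 hc)
  have hs''b : s'' ∈ sJoin (boxProd L) (insert s A) := by
    apply mem_sJoin_box hL
    intro a' ha' hsub
    obtain ⟨α₀, h₀⟩ := hsub (Set.mem_insert s A)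
    by_cases hα₀ : δ = α₀
    · subst hα₀
      rw [hsδ] at h₀
      by_cases hsub2 : m ⊆ a' δ
      · have h3 : sJoin (L δ) (insert y m) ⊆ a' δ :=
          sJoin_subset' (ha' δ) (insert_subset h₀ hsub2)
        exact ⟨δ, by rw [hs''δ]; exact h3 hyy'⟩
      · obtain ⟨t, htm, hta⟩ := not_subset.1 hsub2
        have hrA : Function.update z δ t ∈ A :=
          mem_cyl_upd1.2 (by rw [Function.update_self]; exact htm)
        obtain ⟨α₁, h₁⟩ := hsub (Set.mem_insert_of_mem s hrA)
        by_cases hα₁ : δ = α₁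
        · subst hα₁; rw [Function.update_self] at h₁; exact absurd h₁ hta
        · rw [Function.update_of_ne (Ne.symm hα₁)] at h₁
          exact ⟨α₁, by rw [hs''o α₁ (Ne.symm hα₁)]; exact h₁⟩
    · rw [hso α₀ (Ne.symm hα₀)] at h₀
      exact ⟨α₀, by rw [hs''o α₀ (Ne.symm hα₀)]; exact h₀⟩
  have hcB : sJoin (boxProd L) (insert s'' A) ∈ boxProd L := sJoin_box_mem hL _
  have hbB : sJoin (boxProd L) (insert s A) ∈ boxProd L := sJoin_box_mem hL _
  have hcb : sJoin (boxProd L) (insert s'' A) ⊆ sJoin (boxProd L) (insert s A) :=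
    sJoin_subset' hbB (insert_subset hs''b ((Set.subset_insert s A).trans (subset_sJoin' _)))
  have hsnc : s ∉ sJoin (boxProd L) (insert s'' A) := by
    intro hsc
    have hg1 : sJoin (boxProd L) (insert s'' A) ⊆
        cylUnion (upd1 (X := X) δ (sJoin (L δ) (insert y' m))) := by
      apply sJoin_subset' (cylUnion_mem_box hL (upd1_mem hL (sJoin_mem' (hL δ) _)))
      apply insert_subset
      · exact mem_cyl_upd1.2 (by rw [hs''δ]; exact subset_sJoin' _ (Set.mem_insert _ _))
      · intro x hx
        exact mem_cyl_upd1.2 (((Set.subset_insert y' m).trans (subset_sJoin' _)) (mem_cyl_upd1.1 hx))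
    have h5 : s δ ∈ sJoin (L δ) (insert y' m) := mem_cyl_upd1.1 (hg1 hsc)
    rw [hsδ] at h5
    exact hnot h5
  obtain ⟨-, hmax⟩ := hcov s A hAB hsA
  rcases hmax _ hcB ((Set.subset_insert s'' A).trans (subset_sJoin' _)) hcb with h1 | h2
  · exact hs''A (h1 ▸ subset_sJoin' _ (Set.mem_insert s'' A))
  · exact hsnc (by rw [h2]; exact subset_sJoin' _ (Set.mem_insert s A))

/-- Aerts: if the box product of a family of orthocomplemented simple
closure spaces has the covering property or is orthomodular (for the induced
orthocomplementation `#`), then at most one factor is not a power set. -/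
theorem stmt_16 {Ω : Type*} [Nonempty Ω] {X : Ω → Type*} [∀ α, Nonempty (X α)]
    (L : ∀ α, Set (Set (X α))) (hL : ∀ α, IsSCS (L α))
    (f : ∀ α, Set (X α) → Set (X α)) (hf : ∀ α, IsOrthoOn (L α) (f α))
    (h : HasCovProp (boxProd L) ∨
      (∀ a ∈ boxProd L, ∀ b ∈ boxProd L, a ⊆ b →
        b = sJoin (boxProd L) (a ∪ (b ∩ sharp f a)))) :
    ∀ β γ, L β ≠ Set.univ → L γ ≠ Set.univ → β = γ := by
  classical
  intro β γ hβ hγ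
  by_contra hβγ
  have hβγ' : β ≠ γ := hβγ
  obtain ⟨p1, q1, hq1ne, hq1⟩ := exists_nonortho' (hL β) (hf β) hβ
  obtain ⟨p2, q2, hq2ne, hq2⟩ := exists_nonortho' (hL γ) (hf γ) hγ
  set z : ∀ α, X α := fun α => Classical.arbitrary (X α) with hz
  set u := Function.update (Function.update z β p1) γ p2 with hu
  set v := Function.update (Function.update z β q1) γ q2 with hv
  have huβ : u β = p1 := by rw [hu, Function.update_of_ne hβγ', Function.update_self]
  have huγ : u γ = p2 := by rw [hu, Function.update_self]
  have huo : ∀ α, α ≠ β → α ≠ γ → u α = z α := fun α h1 h2 => by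
    rw [hu, Function.update_of_ne h2, Function.update_of_ne h1]
  have hvβ : v β = q1 := by rw [hv, Function.update_of_ne hβγ', Function.update_self]
  have hvγ : v γ = q2 := by rw [hv, Function.update_self]
  have hvo : ∀ α, α ≠ β → α ≠ γ → v α = z α := fun α h1 h2 => by
    rw [hv, Function.update_of_ne h2, Function.update_of_ne h1]
  have hpair := pair_closed hL hβγ' z (Ne.symm hq1ne) (Ne.symm hq2ne)
  have hpairB : ({u, v} : Set (∀ α, X α)) ∈ boxProd L := by
    rw [← hpair]; exact sJoin_box_mem hL _
  rcases h with hcov | hom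
  · -- covering property case
    have hEβ : ExchProp (L β) := cov_exch hL hcov β
    have hEγ : ExchProp (L γ) := cov_exch hL hcov γ
    obtain ⟨r1, hr1mem, hr1p, hr1q⟩ := exists_superpos' (hL β) (hf β) hEβ hq1ne hq1
    obtain ⟨r2, hr2mem, hr2p, hr2q⟩ := exists_superpos' (hL γ) (hf γ) hEγ hq2ne hq2
    have hp1mem : p1 ∈ sJoin (L β) (insert r1 {q1}) := by
      apply hEβ {q1} ((hL β).2.2 q1) p1 r1
      · exact fun hc => hq1ne (Set.mem_singleton_iff.1 hc).symm
      · exact fun hc => hr1q (Set.mem_singleton_iff.1 hc)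
      · exact hr1mem
    have hq2mem : q2 ∈ sJoin (L γ) (insert r2 {p2}) := by
      rw [Set.pair_comm p2 q2] at hr2mem
      apply hEγ {p2} ((hL γ).2.2 p2) q2 r2
      · exact fun hc => hq2ne (Set.mem_singleton_iff.1 hc)
      · exact fun hc => hr2p (Set.mem_singleton_iff.1 hc)
      · exact hr2mem
    set w := Function.update (Function.update z β p1) γ q2 with hw
    set s := Function.update (Function.update z β r1) γ r2 with hs
    have hwβ : w β = p1 := by rw [hw, Function.update_of_ne hβγ', Function.update_self]
    have hwγ : w γ = q2 := by rw [hw, Function.update_self]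
    have hwo : ∀ α, α ≠ β → α ≠ γ → w α = z α := fun α h1 h2 => by
      rw [hw, Function.update_of_ne h2, Function.update_of_ne h1]
    have hsβ : s β = r1 := by rw [hs, Function.update_of_ne hβγ', Function.update_self]
    have hsγ : s γ = r2 := by rw [hs, Function.update_self]
    have hso : ∀ α, α ≠ β → α ≠ γ → s α = z α := fun α h1 h2 => by
      rw [hs, Function.update_of_ne h2, Function.update_of_ne h1]
    have hsA : s ∉ ({u, v} : Set (∀ α, X α)) := by
      rw [Set.mem_insert_iff, Set.mem_singleton_iff]
      rintro (hc | hc)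
      · exact hr1p (by rw [← hsβ, hc, huβ])
      · exact hr1q (by rw [← hsβ, hc, hvβ])
    have hwb : w ∈ sJoin (boxProd L) (insert s {u, v}) := by
      apply mem_sJoin_box hL
      intro a' ha' hsub
      by_contra hwc
      have hwc' : ∀ α, w α ∉ a' α := fun α hα => hwc ⟨α, hα⟩
      have hp2 : p2 ∈ a' γ := by
        obtain ⟨α, hα⟩ := hsub (Set.mem_insert_of_mem s (Set.mem_insert u {v}))
        by_cases h1 : β = α
        · exfalso; subst h1; rw [huβ] at hα
          have hh := hwc' β; rw [hwβ] at hh; exact hh hα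
        · by_cases h2 : γ = α
          · subst h2; rwa [huγ] at hα
          · exfalso; have hh := hwc' α; rw [hwo α (Ne.symm h1) (Ne.symm h2)] at hh
            rw [huo α (Ne.symm h1) (Ne.symm h2)] at hα; exact hh hα
      have hq1' : q1 ∈ a' β := by
        obtain ⟨α, hα⟩ := hsub (Set.mem_insert_of_mem s (Set.mem_insert_of_mem u rfl))
        by_cases h2 : γ = α
        · exfalso; subst h2; rw [hvγ] at hα
          have hh := hwc' γ; rw [hwγ] at hh; exact hh hα
        · by_cases h1 : β = α
          · subst h1; rwa [hvβ] at hα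
          · exfalso; have hh := hwc' α; rw [hwo α (Ne.symm h1) (Ne.symm h2)] at hh
            rw [hvo α (Ne.symm h1) (Ne.symm h2)] at hα; exact hh hα
      obtain ⟨α, hα⟩ := hsub (Set.mem_insert s {u, v})
      by_cases h1 : β = α
      · subst h1; rw [hsβ] at hα
        have h6 : sJoin (L β) (insert r1 {q1}) ⊆ a' β :=
          sJoin_subset' (ha' β) (insert_subset hα (singleton_subset_iff.2 hq1'))
        have hh := hwc' β; rw [hwβ] at hh; exact hh (h6 hp1mem)
      · by_cases h2 : γ = α
        · subst h2; rw [hsγ] at hα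
          have h6 : sJoin (L γ) (insert r2 {p2}) ⊆ a' γ :=
            sJoin_subset' (ha' γ) (insert_subset hα (singleton_subset_iff.2 hp2))
          have hh := hwc' γ; rw [hwγ] at hh; exact hh (h6 hq2mem)
        · have hh := hwc' α; rw [hwo α (Ne.symm h1) (Ne.symm h2)] at hh
          rw [hso α (Ne.symm h1) (Ne.symm h2)] at hα; exact hh hα
    have hcB : sJoin (boxProd L) (insert w {u, v}) ∈ boxProd L := sJoin_box_mem hL _
    have hbB : sJoin (boxProd L) (insert s {u, v}) ∈ boxProd L := sJoin_box_mem hL _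
    have hcb : sJoin (boxProd L) (insert w {u, v}) ⊆ sJoin (boxProd L) (insert s {u, v}) :=
      sJoin_subset' hbB (insert_subset hwb ((Set.subset_insert s _).trans (subset_sJoin' _)))
    have hsnc : s ∉ sJoin (boxProd L) (insert w {u, v}) := by
      intro hsc
      have hg3 : sJoin (boxProd L) (insert w {u, v}) ⊆
          cylUnion (upd2 (X := X) β γ {p1} {q2}) := by
        apply sJoin_subset'
          (cylUnion_mem_box hL (upd2_mem hL hβγ' ((hL β).2.2 p1) ((hL γ).2.2 q2)))
        intro x hx
        rw [Set.mem_insert_iff, Set.mem_insert_iff, Set.mem_singleton_iff] at hx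
        rcases hx with rfl | rfl | rfl
        · exact (mem_cyl_upd2 hβγ').2 (Or.inl (by rw [hwβ]; rfl))
        · exact (mem_cyl_upd2 hβγ').2 (Or.inl (by rw [huβ]; rfl))
        · exact (mem_cyl_upd2 hβγ').2 (Or.inr (by rw [hvγ]; rfl))
      have h7 : s β ∈ ({p1} : Set (X β)) ∨ s γ ∈ ({q2} : Set (X γ)) :=
        (mem_cyl_upd2 hβγ').1 (hg3 hsc)
      rcases h7 with h7 | h7
      · rw [hsβ] at h7; exact hr1p (Set.mem_singleton_iff.1 h7)
      · rw [hsγ] at h7; exact hr2q (Set.mem_singleton_iff.1 h7)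
    obtain ⟨-, hmax⟩ := hcov s {u, v} hpairB hsA
    rcases hmax _ hcB ((Set.subset_insert w _).trans (subset_sJoin' _)) hcb with h1 | h2
    · have hwc2 : w ∈ ({u, v} : Set (∀ α, X α)) :=
        h1 ▸ subset_sJoin' (L := boxProd L) _ (Set.mem_insert w _)
      rw [Set.mem_insert_iff, Set.mem_singleton_iff] at hwc2
      rcases hwc2 with hc | hc
      · exact hq2ne (by rw [← hwγ, hc, huγ])
      · have hc2 : q1 = p1 := by rw [← hvβ, ← hc, hwβ]
        exact hq1ne hc2
    · exact hsnc (by rw [h2]; exact subset_sJoin' _ (Set.mem_insert s _))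
  · -- orthomodular case
    have hsingB : ({u} : Set (∀ α, X α)) ∈ boxProd L := point_mem_box hL u
    have hsharp : ({u, v} : Set (∀ α, X α)) ∩ sharp f {u} = ∅ := by
      rw [Set.eq_empty_iff_forall_notMem]
      rintro r ⟨hr1, hr2⟩
      rw [Set.mem_insert_iff, Set.mem_singleton_iff] at hr1
      rcases hr1 with rfl | rfl
      · obtain ⟨α, hα⟩ := hr2 u rfl
        exact notMem_f_singleton' (hL α) (hf α) (u α) hα
      · obtain ⟨α, hα⟩ := hr2 u rfl
        by_cases h1 : β = α
        · subst h1; rw [hvβ, huβ] at hα; exact hq1 hα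
        · by_cases h2 : γ = α
          · subst h2; rw [hvγ, huγ] at hα; exact hq2 hα
          · rw [hvo α (Ne.symm h1) (Ne.symm h2), huo α (Ne.symm h1) (Ne.symm h2)] at hα
            exact notMem_f_singleton' (hL α) (hf α) (z α) hα
    have hOM := hom {u} hsingB {u, v} hpairB
      (singleton_subset_iff.2 (Set.mem_insert u {v}))
    rw [hsharp, Set.union_empty, sJoin_eq_self' hsingB] at hOM
    have hvu : v ∈ ({u} : Set (∀ α, X α)) := hOM ▸ Set.mem_insert_of_mem u rfl
    have hc2 : q1 = p1 := by rw [← hvβ, Set.mem_singleton_iff.1 hvu, huβ]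
    exact hq1ne hc2
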